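/- Let S ⊊ ℕ be a numerical semigroup, m an odd element of S, and H an upper m-set of S. Then the set S(m,H) = {2s : s ∈ S} ∪ {2s+m : s ∈ S} ∪ {2h+m : h ∈ H} is a numerical semigroup satisfying S(m,H)/2 = S. -/
import Mathlib


/-- A numerical semigroup: a submonoid of (ℕ,+) with finite complement. -/
def IsNumericalSemigroup (S : Set ℕ) : Prop :=
  0 ∈ S ∧ (∀ a ∈ S, ∀ b ∈ S, a + b ∈ S) ∧ Sᶜ.Finite

/-- The quotient S/d = {x ∈ ℕ : d*x ∈ S}. -/
def NumQuot (S : Set ℕ) (d : ℕ) : Set ℕ := {x | d * x ∈ S}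

/-- The Frobenius number of S (for S ≠ ℕ): the maximum of the complement. -/
noncomputable def frob (S : Set ℕ) : ℕ := sSup Sᶜ

/-- The multiplicity of S: the least positive element. -/
noncomputable def mult (S : Set ℕ) : ℕ := sInf (S \ {0})

/-- T is an arithmetic extension of S if T = {x : d₁x,...,dₙx ∈ S} for some
positive integers d₁,...,dₙ. -/
def IsArithmeticExtension (S T : Set ℕ) : Prop :=
  ∃ D : Finset ℕ, D.Nonempty ∧ (∀ d ∈ D, 0 < d) ∧ T = {x | ∀ d ∈ D, d * x ∈ S}

/-- An arithmetic variety: a nonempty family of numerical semigroups closed under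
pairwise intersections and arithmetic extensions. -/
def IsArithmeticVariety (𝒜 : Set (Set ℕ)) : Prop :=
  𝒜.Nonempty ∧ (∀ S ∈ 𝒜, IsNumericalSemigroup S) ∧
    (∀ S ∈ 𝒜, ∀ T ∈ 𝒜, S ∩ T ∈ 𝒜) ∧
    (∀ S ∈ 𝒜, ∀ T : Set ℕ, IsArithmeticExtension S T → T ∈ 𝒜)

/-- An upper m-set of S: H ⊆ ℕ \ S with (C1) h+m ∈ S, (C2) h₁+h₂+m ∈ S,
(C3) if h ∈ H, x ∉ S and x - h ∈ S then x ∈ H. -/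
def IsUpperMSet (S : Set ℕ) (m : ℕ) (H : Set ℕ) : Prop :=
  H ⊆ Sᶜ ∧ (∀ h ∈ H, h + m ∈ S) ∧ (∀ h₁ ∈ H, ∀ h₂ ∈ H, h₁ + h₂ + m ∈ S) ∧
    (∀ h ∈ H, ∀ x : ℕ, x ∉ S → h ≤ x → x - h ∈ S → x ∈ H)

/-- S(m,H) = 2S ∪ (2S + m) ∪ (2H + m). -/
def DupSet (S : Set ℕ) (m : ℕ) (H : Set ℕ) : Set ℕ :=
  {y | ∃ s ∈ S, y = 2 * s} ∪ {y | ∃ s ∈ S, y = 2 * s + m} ∪ {y | ∃ h ∈ H, y = 2 * h + m}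

theorem dupSet_isNumericalSemigroup_and_quot (S : Set ℕ)
    (hS : IsNumericalSemigroup S) (hS' : S ≠ Set.univ)
    (m : ℕ) (hm : m ∈ S) (hodd : Odd m) (H : Set ℕ) (hH : IsUpperMSet S m H) :
    IsNumericalSemigroup (DupSet S m H) ∧ NumQuot (DupSet S m H) 2 = S := by
  obtain ⟨hS0, hSadd, hSfin⟩ := hS
  obtain ⟨hHc, hC1, hC2, hC3⟩ := hH
  obtain ⟨k, hk⟩ := hodd
  -- bound on the complement of S
  obtain ⟨b, hb⟩ := hSfin.bddAbove
  have hbig : ∀ n : ℕ, b < n → n ∈ S := by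
    intro n hn
    by_contra hns
    exact absurd (hb hns) (by omega)
  constructor
  · refine ⟨Or.inl (Or.inl ⟨0, hS0, by ring⟩), ?_, ?_⟩
    · rintro a (ha | ha) c (hc | hc)
      · rcases ha with ⟨s, hs, rfl⟩ | ⟨s, hs, rfl⟩ <;>
          rcases hc with ⟨t, ht, rfl⟩ | ⟨t, ht, rfl⟩
        · exact Or.inl (Or.inl ⟨s + t, hSadd s hs t ht, by ring⟩)
        · exact Or.inl (Or.inr ⟨s + t, hSadd s hs t ht, by ring⟩)
        · exact Or.inl (Or.inr ⟨s + t, hSadd s hs t ht, by ring⟩)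
        · exact Or.inl (Or.inl ⟨s + t + m, hSadd _ (hSadd s hs t ht) m hm, by omega⟩)
      · obtain ⟨h, hh, rfl⟩ := hc
        rcases ha with ⟨s, hs, rfl⟩ | ⟨s, hs, rfl⟩
        · by_cases hsh : s + h ∈ S
          · exact Or.inl (Or.inr ⟨s + h, hsh, by ring⟩)
          · refine Or.inr ⟨s + h, hC3 h hh (s + h) hsh (by omega) ?_, by ring⟩
            rw [Nat.add_sub_cancel]; exact hs
        · exact Or.inl (Or.inl ⟨s + (h + m), hSadd s hs _ (hC1 h hh), by ring⟩)
      · obtain ⟨h, hh, rfl⟩ := ha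
        rcases hc with ⟨t, ht, rfl⟩ | ⟨t, ht, rfl⟩
        · by_cases hsh : t + h ∈ S
          · exact Or.inl (Or.inr ⟨t + h, hsh, by ring⟩)
          · refine Or.inr ⟨t + h, hC3 h hh (t + h) hsh (by omega) ?_, by ring⟩
            rw [Nat.add_sub_cancel]; exact ht
        · exact Or.inl (Or.inl ⟨t + (h + m), hSadd t ht _ (hC1 h hh), by ring⟩)
      · obtain ⟨h, hh, rfl⟩ := ha
        obtain ⟨h', hh', rfl⟩ := hc
        exact Or.inl (Or.inl ⟨h + h' + m, hC2 h hh h' hh', by ring⟩)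
    · apply Set.Finite.subset (Set.finite_Iio (2 * b + m + 3))
      intro y hy
      simp only [Set.mem_Iio]
      by_contra hylt
      apply hy
      rcases Nat.even_or_odd y with ⟨j, hj⟩ | ⟨j, hj⟩
      · exact Or.inl (Or.inl ⟨j, hbig j (by omega), by omega⟩)
      · exact Or.inl (Or.inr ⟨j - k, hbig (j - k) (by omega), by omega⟩)
  · ext x
    simp only [NumQuot, Set.mem_setOf_eq]
    constructor
    · rintro ((⟨s, hs, he⟩ | ⟨s, hs, he⟩) | ⟨h, hh, he⟩)
      · have : x = s := by omega
        rwa [this]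
      · omega
      · omega
    · intro hx
      exact Or.inl (Or.inl ⟨x, hx, rfl⟩)
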